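/- Let f be holomorphic on the closed sector S̄(−α,α,r_0), of order at most ρ with 0 < ρ < π/(2α). If h_{f,ρ}(±α) ≤ 0 then for every a > 0 there is a constant C > 0 such that |f(z)| ≤ C·e^{a|z|^ρ} on S̄(−α,α,r_0). -/

import Mathlib

noncomputable section

/-- The open sector `S(α,β,r₀) = {r·e^{iθ} : r > r₀, α < θ < β}`. -/
def Sector (α β r₀ : ℝ) : Set ℂ :=
  {z | ∃ r θ : ℝ, r₀ < r ∧ α < θ ∧ θ < β ∧ z = (r : ℂ) * Complex.exp (θ * Complex.I)}

/-- `f` is of order at most `ρ` on the set `S`: for every `ρ' > ρ` there is a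
constant `C` with `|f(z)| ≤ C·exp(|z|^{ρ'})` on `S`. -/
def OrderAtMost (f : ℂ → ℂ) (S : Set ℂ) (ρ : ℝ) : Prop :=
  ∀ ρ' > ρ, ∃ C > 0, ∀ z ∈ S, ‖f z‖ ≤ C * Real.exp (‖z‖ ^ ρ')

/-- The indicator of order `ρ` of `f` in the direction `θ`:
`h_{f,ρ}(θ) = limsup_{r→∞} log|f(r e^{iθ})| / r^ρ`. -/
def Indicator (f : ℂ → ℂ) (ρ θ : ℝ) : ℝ :=
  Filter.limsup
    (fun r : ℝ => Real.log ‖f ((r : ℂ) * Complex.exp (θ * Complex.I))‖ / r ^ ρ)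
    Filter.atTop

/-- The indicator of `f` of order `ρ` in the direction `θ` is finite (bounded above). -/
def IndicatorFinite (f : ℂ → ℂ) (ρ θ : ℝ) : Prop :=
  Filter.IsBoundedUnder (· ≤ ·) Filter.atTop
    (fun r : ℝ => Real.log ‖f ((r : ℂ) * Complex.exp (θ * Complex.I))‖ / r ^ ρ)

section AuxPL
open Complex Filter Set Topology

lemma aux_exp_rpow (x t : ℝ) : Real.exp x ^ t = Real.exp (t * x) := by
  rw [Real.rpow_def_of_pos (Real.exp_pos x), Real.log_exp, mul_comm]

lemma aux_abs_mul_expI (r θ : ℝ) :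
    ‖(r : ℂ) * Complex.exp (θ * Complex.I)‖ = |r| := by
  rw [norm_mul, Complex.norm_exp_ofReal_mul_I, Complex.norm_real, Real.norm_eq_abs, mul_one]

lemma aux_exp_eq (u : ℂ) :
    Complex.exp u = (Real.exp u.re : ℂ) * Complex.exp (u.im * Complex.I) := by
  rw [Complex.ofReal_exp, ← Complex.exp_add, Complex.re_add_im]

lemma aux_abs_weight (b t : ℝ) (u : ℂ) :
    ‖Complex.exp (-(b:ℂ) * Complex.exp ((t:ℂ) * u))‖
      = Real.exp (-(b * (Real.exp (t * u.re) * Real.cos (t * u.im)))) := by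
  rw [Complex.norm_exp]
  congr 1
  simp [Complex.exp_re, Complex.mul_re, Complex.mul_im]

lemma aux_cos_ge {t α y : ℝ} (ht : 0 < t) (hαt : t * α < Real.pi / 2) (hy : |y| ≤ α) :
    Real.cos (t * α) ≤ Real.cos (t * y) := by
  have hα0 : 0 ≤ α := le_trans (abs_nonneg y) hy
  have h1 : Real.cos (t * y) = Real.cos (t * |y|) := by
    rcases abs_choice y with h | h
    · rw [h]
    · rw [h, mul_neg, Real.cos_neg]
  rw [h1]
  apply Real.cos_le_cos_of_nonneg_of_le_pi (by positivity)
  · nlinarith [Real.pi_pos]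
  · nlinarith [abs_nonneg y]

lemma aux_mem_sector {α r₀ : ℝ} {r θ : ℝ} (hr : r₀ < r) (h1 : -α < θ) (h2 : θ < α) :
    (r : ℂ) * Complex.exp ((θ:ℂ) * Complex.I) ∈ Sector (-α) α r₀ :=
  ⟨r, θ, hr, h1, h2, rfl⟩

lemma aux_mem_closure_sector {α r₀ : ℝ} (hα : 0 < α) {r y : ℝ} (hr : r₀ < r)
    (hy : |y| ≤ α) :
    (r : ℂ) * Complex.exp ((y:ℂ) * Complex.I) ∈ closure (Sector (-α) α r₀) := by
  have hne : (𝓝[Set.Ioo (0:ℝ) 1] 1).NeBot := by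
    rw [← mem_closure_iff_nhdsWithin_neBot, closure_Ioo one_ne_zero.symm]
    exact ⟨le_of_lt one_pos, le_refl 1⟩
  have hcont : Tendsto (fun t : ℝ => (r : ℂ) * Complex.exp (((t * y : ℝ):ℂ) * Complex.I))
      (𝓝[Set.Ioo (0:ℝ) 1] 1) (𝓝 ((r : ℂ) * Complex.exp ((y:ℂ) * Complex.I))) := by
    have : Continuous (fun t : ℝ => (r : ℂ) * Complex.exp (((t * y : ℝ):ℂ) * Complex.I)) := by
      continuity
    have h := this.tendsto 1
    simp only [one_mul] at h
    exact h.mono_left nhdsWithin_le_nhds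
  refine mem_closure_of_tendsto hcont ?_
  filter_upwards [eventually_mem_nhdsWithin] with t ht
  rcases ht with ⟨ht0, ht1⟩
  refine aux_mem_sector hr ?_ ?_
  · rcases abs_cases y with ⟨h, _⟩ | ⟨h, _⟩
    · nlinarith
    · nlinarith
  · rcases abs_cases y with ⟨h, _⟩ | ⟨h, _⟩
    · nlinarith
    · nlinarith

lemma aux_closure_repr {α r₀ : ℝ} {z : ℂ} (hz : z ∈ closure (Sector (-α) α r₀))
    (hbig : |r₀| + 2 ≤ ‖z‖) :
    ∃ θ : ℝ, -α ≤ θ ∧ θ ≤ α ∧ z = ((‖z‖ : ℝ) : ℂ) * Complex.exp ((θ:ℂ) * Complex.I) := by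
  set S := Sector (-α) α r₀ with hS
  have hzball : z ∈ Metric.ball z 1 := Metric.mem_ball_self one_pos
  have h1 : z ∈ closure (Metric.ball z 1 ∩ S) :=
    Metric.isOpen_ball.inter_closure ⟨hzball, hz⟩
  set K : Set ℂ := (fun p : ℝ × ℝ => ((p.1 : ℂ) * Complex.exp ((p.2:ℂ) * Complex.I))) ''
    (Set.Icc (‖z‖ - 1) (‖z‖ + 1) ×ˢ Set.Icc (-α) α) with hK
  have hKcomp : IsCompact K := by
    apply (isCompact_Icc.prod isCompact_Icc).image
    continuity
  have hsub : Metric.ball z 1 ∩ S ⊆ K := by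
    rintro w ⟨hwball, r, θ, hr, hθ1, hθ2, rfl⟩
    have habs : ‖(r:ℂ) * Complex.exp ((θ:ℂ) * Complex.I)‖ = |r| :=
      aux_abs_mul_expI r θ
    have hd : ‖(r:ℂ) * Complex.exp ((θ:ℂ) * Complex.I) - z‖ < 1 := by
      rw [← Complex.dist_eq]; exact hwball
    have htri : |‖(r:ℂ) * Complex.exp ((θ:ℂ) * Complex.I)‖ - ‖z‖|
        ≤ ‖(r:ℂ) * Complex.exp ((θ:ℂ) * Complex.I) - z‖ := by
      simpa [Complex.dist_eq] using
        abs_norm_sub_norm_le ((r:ℂ) * Complex.exp ((θ:ℂ) * Complex.I)) z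
    rw [habs] at htri
    have hr2 : ‖z‖ - 1 < |r| ∧ |r| < ‖z‖ + 1 := by
      constructor <;> [skip; skip] <;> cases abs_cases (|r| - ‖z‖) <;>
        first | nlinarith [abs_nonneg r] | nlinarith [abs_nonneg r]
    have hrpos : 0 < r := by
      rcases lt_or_ge 0 r with h | h
      · exact h
      · exfalso
        have : |r| ≤ |r₀| := by
          cases abs_cases r₀ <;> cases abs_cases r <;> nlinarith
        nlinarith [hr2.1]
    refine ⟨(r, θ), ⟨⟨?_, ?_⟩, le_of_lt hθ1, le_of_lt hθ2⟩, rfl⟩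
    · rw [abs_of_pos hrpos] at hr2; linarith [hr2.1]
    · rw [abs_of_pos hrpos] at hr2; linarith [hr2.2]
  have h2 : z ∈ K := by
    have := closure_mono hsub h1
    rwa [hKcomp.isClosed.closure_eq] at this
  obtain ⟨⟨r, θ⟩, ⟨⟨hra, hrb⟩, hθa, hθb⟩, hzeq⟩ := h2
  have hrpos : 0 < r := by nlinarith [abs_nonneg r₀]
  simp only at hzeq hra hrb hθa hθb
  have hrabs : ‖z‖ = r := by
    rw [← hzeq, aux_abs_mul_expI, abs_of_pos hrpos]
  exact ⟨θ, hθa, hθb, by rw [hrabs, hzeq]⟩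

lemma aux_ray_bound (f : ℂ → ℂ) (ρ θ δ : ℝ) (hδ : 0 < δ) (hρ : 0 < ρ)
    (hfin : IndicatorFinite f ρ θ) (hind : Indicator f ρ θ ≤ 0) :
    ∃ r₁ : ℝ, 1 ≤ r₁ ∧ ∀ r, r₁ ≤ r →
      ‖f ((r:ℂ) * Complex.exp ((θ:ℂ) * Complex.I))‖ ≤ Real.exp (δ * r ^ ρ) := by
  have h := Filter.eventually_lt_of_limsup_lt (lt_of_le_of_lt hind hδ) hfin
  rw [Filter.eventually_atTop] at h
  obtain ⟨r₁, hr₁⟩ := h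
  refine ⟨max r₁ 1, le_max_right _ _, fun r hr => ?_⟩
  have hr1 : (1:ℝ) ≤ r := le_trans (le_max_right _ _) hr
  have hrpos : (0:ℝ) < r := lt_of_lt_of_le one_pos hr1
  have hrρ : (0:ℝ) < r ^ ρ := Real.rpow_pos_of_pos hrpos ρ
  have h2 := hr₁ r (le_trans (le_max_left _ _) hr)
  have h3 : Real.log (‖f ((r:ℂ) * Complex.exp ((θ:ℂ) * Complex.I))‖) < δ * r ^ ρ := by
    rw [div_lt_iff₀ hrρ] at h2
    linarith [h2]
  rcases eq_or_lt_of_le (norm_nonneg (f ((r:ℂ) * Complex.exp ((θ:ℂ) * Complex.I)))) with h4 | h4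
  · rw [← h4]; positivity
  · calc ‖f ((r:ℂ) * Complex.exp ((θ:ℂ) * Complex.I))‖
        = Real.exp (Real.log (‖f ((r:ℂ) * Complex.exp ((θ:ℂ) * Complex.I))‖)) :=
          (Real.exp_log h4).symm
      _ ≤ Real.exp (δ * r ^ ρ) := Real.exp_le_exp.mpr (le_of_lt h3)


set_option maxHeartbeats 2000000 in
lemma aux_strip (α r₀ ρ ρ' ρ'' a C' B L : ℝ) (f : ℂ → ℂ)
    (hα : 0 < α) (hρ : 0 < ρ) (hρ' : ρ < ρ') (hρ'' : ρ' < ρ'') (hα'' : ρ'' * α < Real.pi/2)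
    (ha : 0 < a) (hC' : 0 < C') (hB : 1 ≤ B)
    (hf : DifferentiableOn ℂ f (closure (Sector (-α) α r₀)))
    (hford : ∀ z ∈ Sector (-α) α r₀, ‖f z‖ ≤ C' * Real.exp (‖z‖ ^ ρ'))
    (hL : r₀ < Real.exp L)
    (hray : ∀ x, L ≤ x → ∀ y : ℝ, (y = α ∨ y = -α) →
      ‖f ((Real.exp x : ℂ) * Complex.exp ((y:ℂ)*Complex.I))‖
        ≤ Real.exp ((a * Real.cos (ρ*α)/2) * Real.exp (ρ * x)))
    (hleft : ∀ y : ℝ, |y| ≤ α → ‖f ((Real.exp L : ℂ) * Complex.exp ((y:ℂ)*Complex.I))‖ ≤ B)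
    (w : ℂ) (hw1 : L < w.re) (hw2 : |w.im| ≤ α) :
    ‖f (Complex.exp w)‖ ≤ B * Real.exp (a * Real.exp (ρ * w.re)) := by
  have hρ''pos : 0 < ρ'' := lt_trans (lt_trans hρ hρ') hρ''
  have hρ'pos : 0 < ρ' := lt_trans hρ hρ'
  have hαρ : ρ * α < Real.pi / 2 := by nlinarith
  have hc0 : 0 < Real.cos (ρ * α) := by
    apply Real.cos_pos_of_mem_Ioo; constructor
    · nlinarith [Real.pi_pos]
    · exact hαρ
  have hc'' : 0 < Real.cos (ρ'' * α) := by
    apply Real.cos_pos_of_mem_Ioo; constructor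
    · nlinarith [Real.pi_pos]
    · exact hα''
  -- Step 1: for every ε > 0
  have step1 : ∀ ε : ℝ, 0 < ε →
      ‖f (Complex.exp w)‖ *
        Real.exp (-(a * (Real.exp (ρ * w.re) * Real.cos (ρ * w.im))))
      ≤ B * Real.exp (ε * (Real.exp (ρ'' * w.re) * Real.cos (ρ'' * w.im))) := by
    intro ε hε
    -- choose T
    have hT1 : ∀ᶠ T in Filter.atTop, 2/(ε*Real.cos (ρ''*α)) ≤ Real.exp ((ρ''-ρ')*T) := by
      have ht : Filter.Tendsto (fun T : ℝ => Real.exp ((ρ''-ρ')*T)) Filter.atTop Filter.atTop :=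
        Real.tendsto_exp_atTop.comp (Filter.Tendsto.const_mul_atTop (by linarith) Filter.tendsto_id)
      exact ht.eventually_ge_atTop _
    have hT2 : ∀ᶠ T in Filter.atTop, max (Real.log C') 0 ≤ Real.exp (ρ'*T) := by
      have ht : Filter.Tendsto (fun T : ℝ => Real.exp (ρ'*T)) Filter.atTop Filter.atTop :=
        Real.tendsto_exp_atTop.comp (Filter.Tendsto.const_mul_atTop hρ'pos Filter.tendsto_id)
      exact ht.eventually_ge_atTop _
    have hT3 : ∀ᶠ T in Filter.atTop, max (w.re + 1) (L + 1) ≤ T :=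
      Filter.eventually_ge_atTop _
    obtain ⟨T, hTa, hTb, hTc⟩ := (hT1.and (hT2.and hT3)).exists
    have hLT : L < T := by
      have := le_trans (le_max_right (w.re+1) (L+1)) hTc; linarith
    have hwT : w.re < T := by
      have := le_trans (le_max_left (w.re+1) (L+1)) hTc; linarith
    -- key T property
    have hTkey : Real.log C' + Real.exp (ρ'*T) ≤ ε * Real.cos (ρ''*α) * Real.exp (ρ''*T) := by
      have hsplit : Real.exp (ρ''*T) = Real.exp ((ρ''-ρ')*T) * Real.exp (ρ'*T) := by
        rw [← Real.exp_add]; ring_nf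
      have h4 : 2 ≤ ε * Real.cos (ρ''*α) * Real.exp ((ρ''-ρ')*T) := by
        rw [div_le_iff₀ (by positivity)] at hTa
        nlinarith [hTa]
      have h5 : Real.log C' ≤ Real.exp (ρ'*T) := le_trans (le_max_left _ _) hTb
      have h6 : (0:ℝ) ≤ Real.exp (ρ'*T) := le_of_lt (Real.exp_pos _)
      rw [hsplit, ← mul_assoc]
      nlinarith [mul_le_mul_of_nonneg_right h4 h6]
    -- the rectangle
    set U : Set ℂ := Set.Ioo L T ×ℂ Set.Ioo (-α) α with hU
    have hclU : closure U = Set.Icc L T ×ℂ Set.Icc (-α) α := by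
      rw [hU, closure_reProdIm, closure_Ioo (ne_of_lt hLT), closure_Ioo (by linarith : -α ≠ α)]
    -- the auxiliary function
    set g : ℂ → ℂ := fun u => f (Complex.exp u) * Complex.exp (-(a:ℂ) * Complex.exp ((ρ:ℂ)*u))
        * Complex.exp (-(ε:ℂ) * Complex.exp ((ρ'':ℂ)*u)) with hg
    -- g is DiffContOnCl
    have hmaps : Set.MapsTo Complex.exp (closure U) (closure (Sector (-α) α r₀)) := by
      intro u hu
      rw [hclU, Complex.mem_reProdIm] at hu
      rw [aux_exp_eq u]
      apply aux_mem_closure_sector hα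
      · calc r₀ < Real.exp L := hL
          _ ≤ Real.exp u.re := Real.exp_le_exp.mpr hu.1.1
      · exact abs_le.mpr ⟨hu.2.1, hu.2.2⟩
    have hgd : DiffContOnCl ℂ g U := by
      apply DifferentiableOn.diffContOnCl
      have h1 : DifferentiableOn ℂ (fun u => f (Complex.exp u)) (closure U) :=
        DifferentiableOn.comp hf Complex.differentiable_exp.differentiableOn hmaps
      apply DifferentiableOn.mul
      apply DifferentiableOn.mul h1
      · exact (Differentiable.differentiableOn (by fun_prop))
      · exact (Differentiable.differentiableOn (by fun_prop))
    -- U is bounded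
    have hUbd : Bornology.IsBounded U := by
      apply (Metric.isBounded_closedBall (x := (0:ℂ)) (r := |L|+|T|+α)).subset
      intro u hu
      rw [hU, Complex.mem_reProdIm, Set.mem_Ioo, Set.mem_Ioo] at hu
      obtain ⟨⟨ha1, ha2⟩, hb1, hb2⟩ := hu
      rw [Metric.mem_closedBall, dist_zero_right]
      have htr := Complex.norm_le_abs_re_add_abs_im u
      have h5 : |u.re| ≤ |L| + |T| := by
        cases abs_cases u.re <;> cases abs_cases L <;> cases abs_cases T <;> linarith
      have h6 : |u.im| ≤ α := abs_le.mpr ⟨le_of_lt hb1, le_of_lt hb2⟩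
      linarith
    -- modulus of g
    have habsg : ∀ u : ℂ, ‖g u‖ =
        ‖f (Complex.exp u)‖
        * Real.exp (-(a * (Real.exp (ρ * u.re) * Real.cos (ρ * u.im))))
        * Real.exp (-(ε * (Real.exp (ρ'' * u.re) * Real.cos (ρ'' * u.im)))) := by
      intro u
      show ‖f (Complex.exp u) * Complex.exp (-(a:ℂ) * Complex.exp ((ρ:ℂ)*u))
        * Complex.exp (-(ε:ℂ) * Complex.exp ((ρ'':ℂ)*u))‖ = _
      rw [norm_mul, norm_mul, aux_abs_weight, aux_abs_weight]
    have hcosρ : ∀ y : ℝ, |y| ≤ α → 0 < Real.cos (ρ * y) := fun y hy =>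
      lt_of_lt_of_le hc0 (aux_cos_ge hρ hαρ hy)
    have hcosρ'' : ∀ y : ℝ, |y| ≤ α → 0 < Real.cos (ρ'' * y) := fun y hy =>
      lt_of_lt_of_le hc'' (aux_cos_ge hρ''pos hα'' hy)
    have hWa : ∀ u : ℂ, |u.im| ≤ α →
        Real.exp (-(a * (Real.exp (ρ * u.re) * Real.cos (ρ * u.im)))) ≤ 1 := by
      intro u hu
      rw [Real.exp_le_one_iff]
      linarith [mul_pos ha (mul_pos (Real.exp_pos (ρ*u.re)) (hcosρ u.im hu))]
    have hWe : ∀ u : ℂ, |u.im| ≤ α →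
        Real.exp (-(ε * (Real.exp (ρ'' * u.re) * Real.cos (ρ'' * u.im)))) ≤ 1 := by
      intro u hu
      rw [Real.exp_le_one_iff]
      linarith [mul_pos hε (mul_pos (Real.exp_pos (ρ''*u.re)) (hcosρ'' u.im hu))]
    -- the frontier bound
    have hfront : ∀ u ∈ frontier U, ‖g u‖ ≤ B := by
      intro u hu
      rw [hU, frontier_reProdIm, closure_Ioo (ne_of_lt hLT),
        closure_Ioo (by linarith : -α ≠ α), frontier_Ioo hLT,
        frontier_Ioo (by linarith : -α < α)] at hu
      rw [habsg]
      -- reduce to three cases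
      have hray' : (u.im = -α ∨ u.im = α) → L ≤ u.re → u.re ≤ T →
          ‖f (Complex.exp u)‖
          * Real.exp (-(a * (Real.exp (ρ * u.re) * Real.cos (ρ * u.im))))
          * Real.exp (-(ε * (Real.exp (ρ'' * u.re) * Real.cos (ρ'' * u.im)))) ≤ B := by
        intro him hL1 hL2
        have him' : |u.im| ≤ α := by
          rcases him with h | h <;> rw [h, abs_le] <;> constructor <;> linarith
        have hcos_eq : Real.cos (ρ * u.im) = Real.cos (ρ * α) := by
          rcases him with h | h <;> rw [h]
          rw [mul_neg, Real.cos_neg]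
        have hA : ‖f (Complex.exp u)‖
            ≤ Real.exp ((a * Real.cos (ρ*α)/2) * Real.exp (ρ * u.re)) := by
          rw [aux_exp_eq u]
          exact hray u.re hL1 u.im (by tauto)
        have hAnn : (0:ℝ) ≤ ‖f (Complex.exp u)‖ := norm_nonneg _
        calc ‖f (Complex.exp u)‖
            * Real.exp (-(a * (Real.exp (ρ * u.re) * Real.cos (ρ * u.im))))
            * Real.exp (-(ε * (Real.exp (ρ'' * u.re) * Real.cos (ρ'' * u.im))))
            ≤ Real.exp ((a * Real.cos (ρ*α)/2) * Real.exp (ρ * u.re))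
              * Real.exp (-(a * (Real.exp (ρ * u.re) * Real.cos (ρ * u.im)))) * 1 := by
              apply mul_le_mul _ (hWe u him') (le_of_lt (Real.exp_pos _)) (by positivity)
              exact mul_le_mul_of_nonneg_right hA (le_of_lt (Real.exp_pos _))
          _ = Real.exp ((a * Real.cos (ρ*α)/2) * Real.exp (ρ * u.re)
                - a * (Real.exp (ρ * u.re) * Real.cos (ρ * α))) := by
              rw [mul_one, ← Real.exp_add, hcos_eq]
              ring_nf
          _ ≤ 1 := by
              rw [Real.exp_le_one_iff]
              linarith [mul_pos (mul_pos ha hc0) (Real.exp_pos (ρ*u.re))]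
          _ ≤ B := hB
      rcases hu with h | h <;> rw [Complex.mem_reProdIm] at h
      · -- top/bottom edges
        have him : u.im = -α ∨ u.im = α := by
          have := h.2; simp only [Set.mem_insert_iff, Set.mem_singleton_iff] at this; tauto
        exact hray' him h.1.1 h.1.2
      · -- vertical edges
        have hre : u.re = L ∨ u.re = T := by
          have := h.1; simp only [Set.mem_insert_iff, Set.mem_singleton_iff] at this; tauto
        have him : -α ≤ u.im ∧ u.im ≤ α := ⟨h.2.1, h.2.2⟩
        have him' : |u.im| ≤ α := abs_le.mpr him
        rcases hre with hre | hre
        · -- left edge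
          have hA : ‖f (Complex.exp u)‖ ≤ B := by
            rw [aux_exp_eq u, hre]
            exact hleft u.im him'
          calc ‖f (Complex.exp u)‖
              * Real.exp (-(a * (Real.exp (ρ * u.re) * Real.cos (ρ * u.im))))
              * Real.exp (-(ε * (Real.exp (ρ'' * u.re) * Real.cos (ρ'' * u.im))))
              ≤ B * 1 * 1 := by
                apply mul_le_mul _ (hWe u him') (le_of_lt (Real.exp_pos _)) (by linarith)
                apply mul_le_mul hA (hWa u him') (le_of_lt (Real.exp_pos _)) (by linarith)
            _ = B := by ring
        · -- right edge
          rcases eq_or_lt_of_le him.1 with he | he1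
          · exact hray' (Or.inl he.symm) (by linarith [hre ▸ le_of_lt hLT]) (le_of_eq hre)
          rcases eq_or_lt_of_le him.2 with he | he2
          · exact hray' (Or.inr he) (by linarith [hre ▸ le_of_lt hLT]) (le_of_eq hre)
          -- interior of right edge: sector bound
          have hmem : Complex.exp u ∈ Sector (-α) α r₀ := by
            rw [aux_exp_eq u]
            exact aux_mem_sector (lt_of_lt_of_le hL (Real.exp_le_exp.mpr (hre ▸ le_of_lt hLT))) he1 he2
          have habsz : ‖Complex.exp u‖ = Real.exp T := by
            rw [Complex.norm_exp, hre]
          have hA := hford _ hmem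
          rw [habsz, aux_exp_rpow] at hA
          have hWe' : Real.exp (-(ε * (Real.exp (ρ'' * u.re) * Real.cos (ρ'' * u.im))))
              ≤ Real.exp (-(ε * Real.cos (ρ''*α) * Real.exp (ρ'' * T))) := by
            rw [Real.exp_le_exp, hre]
            linarith [mul_le_mul_of_nonneg_left (aux_cos_ge hρ''pos hα'' him')
              (le_of_lt (mul_pos hε (Real.exp_pos (ρ''*T))))]
          calc ‖f (Complex.exp u)‖
              * Real.exp (-(a * (Real.exp (ρ * u.re) * Real.cos (ρ * u.im))))
              * Real.exp (-(ε * (Real.exp (ρ'' * u.re) * Real.cos (ρ'' * u.im))))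
              ≤ (C' * Real.exp (Real.exp (ρ' * T))) * 1
                  * Real.exp (-(ε * Real.cos (ρ''*α) * Real.exp (ρ'' * T))) := by
                apply mul_le_mul _ hWe' (le_of_lt (Real.exp_pos _)) (by positivity)
                rw [mul_one]
                calc ‖f (Complex.exp u)‖
                    * Real.exp (-(a * (Real.exp (ρ * u.re) * Real.cos (ρ * u.im))))
                    ≤ (C' * Real.exp (Real.exp (ρ' * T))) * 1 := by
                      apply mul_le_mul hA (hWa u him') (le_of_lt (Real.exp_pos _)) (by positivity)
                  _ = C' * Real.exp (Real.exp (ρ' * T)) := by ring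
          _ = Real.exp (Real.log C' + Real.exp (ρ' * T)
                - ε * Real.cos (ρ''*α) * Real.exp (ρ'' * T)) := by
              rw [mul_one, ← Real.exp_log hC', ← Real.exp_add, ← Real.exp_add]
              congr 1
              rw [Real.log_exp]
              ring
          _ ≤ 1 := by rw [Real.exp_le_one_iff]; linarith [hTkey]
          _ ≤ B := hB
    -- apply the maximum principle
    have hwcl : w ∈ closure U := by
      rw [hclU, Complex.mem_reProdIm]
      exact ⟨⟨le_of_lt hw1, le_of_lt hwT⟩, (abs_le.mp hw2).1, (abs_le.mp hw2).2⟩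
    have hmax := Complex.norm_le_of_forall_mem_frontier_norm_le hUbd hgd hfront hwcl
    rw [habsg] at hmax
    set q := ε * (Real.exp (ρ'' * w.re) * Real.cos (ρ'' * w.im)) with hqdef
    calc ‖f (Complex.exp w)‖
        * Real.exp (-(a * (Real.exp (ρ * w.re) * Real.cos (ρ * w.im))))
        = ‖f (Complex.exp w)‖
          * Real.exp (-(a * (Real.exp (ρ * w.re) * Real.cos (ρ * w.im))))
          * Real.exp (-q) * Real.exp q := by
          rw [mul_assoc _ (Real.exp (-q)), ← Real.exp_add, neg_add_cancel, Real.exp_zero, mul_one]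
      _ ≤ B * Real.exp q := by
          apply mul_le_mul_of_nonneg_right hmax (le_of_lt (Real.exp_pos _))
      _ = B * Real.exp (ε * (Real.exp (ρ'' * w.re) * Real.cos (ρ'' * w.im))) := rfl
  -- Step 2: let ε → 0
  have step2 : ‖f (Complex.exp w)‖ *
      Real.exp (-(a * (Real.exp (ρ * w.re) * Real.cos (ρ * w.im)))) ≤ B := by
    set q := Real.exp (ρ'' * w.re) * Real.cos (ρ'' * w.im) with hqdef
    have htend : Filter.Tendsto (fun ε : ℝ => B * Real.exp (ε * q))
        (nhdsWithin 0 (Set.Ioi 0)) (nhds (B * Real.exp (0 * q))) :=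
      ((Continuous.tendsto (by continuity) 0)).mono_left nhdsWithin_le_nhds
    rw [zero_mul, Real.exp_zero, mul_one] at htend
    apply ge_of_tendsto htend
    filter_upwards [eventually_mem_nhdsWithin] with ε hε
    exact step1 ε hε
  -- Step 3: remove the weight
  have hcosw : 0 < Real.cos (ρ * w.im) :=
    lt_of_lt_of_le hc0 (aux_cos_ge hρ hαρ hw2)
  have h7 : ‖f (Complex.exp w)‖
      ≤ B * Real.exp (a * (Real.exp (ρ*w.re) * Real.cos (ρ*w.im))) := by
    set q := a * (Real.exp (ρ*w.re) * Real.cos (ρ*w.im)) with hqdef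
    calc ‖f (Complex.exp w)‖
        = ‖f (Complex.exp w)‖ * Real.exp (-q) * Real.exp q := by
          rw [mul_assoc, ← Real.exp_add, neg_add_cancel, Real.exp_zero, mul_one]
      _ ≤ B * Real.exp q := mul_le_mul_of_nonneg_right step2 (le_of_lt (Real.exp_pos _))
  calc ‖f (Complex.exp w)‖
      ≤ B * Real.exp (a * (Real.exp (ρ*w.re) * Real.cos (ρ*w.im))) := h7
    _ ≤ B * Real.exp (a * Real.exp (ρ * w.re)) := by
        apply mul_le_mul_of_nonneg_left _ (by linarith)
        rw [Real.exp_le_exp]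
        linarith [mul_le_mul_of_nonneg_left (Real.cos_le_one (ρ * w.im))
          (le_of_lt (mul_pos ha (Real.exp_pos (ρ*w.re))))]

end AuxPL

/-- Corollary 2.4 (iii): if `f` is holomorphic on the closed sector of order at most
`ρ < π/(2α)` and `h_{f,ρ}(±α) ≤ 0`, then for every `a > 0` there is `C > 0` with
`|f(z)| ≤ C·e^{a|z|^ρ}` on the closed sector. -/
theorem stmt_7 (α r₀ ρ : ℝ) (hα : 0 < α) (hρ : 0 < ρ) (hρα : ρ < Real.pi / (2 * α))
    (f : ℂ → ℂ)
    (hf : DifferentiableOn ℂ f (closure (Sector (-α) α r₀)))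
    (hford : OrderAtMost f (Sector (-α) α r₀) ρ)
    (hfin₁ : IndicatorFinite f ρ α) (hfin₂ : IndicatorFinite f ρ (-α))
    (hind₁ : Indicator f ρ α ≤ 0) (hind₂ : Indicator f ρ (-α) ≤ 0) :
    ∀ a > 0, ∃ C > 0, ∀ z ∈ closure (Sector (-α) α r₀),
      ‖f z‖ ≤ C * Real.exp (a * ‖z‖ ^ ρ) := by
  intro a ha
  have h2α : (0:ℝ) < 2*α := by linarith
  set ρ' := (ρ + Real.pi/(2*α))/2 with hρ'def
  set ρ'' := (ρ' + Real.pi/(2*α))/2 with hρ''def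
  have h1 : ρ < ρ' := by rw [hρ'def]; linarith
  have h1' : ρ' < Real.pi/(2*α) := by rw [hρ'def]; linarith
  have h2 : ρ' < ρ'' := by rw [hρ''def]; linarith
  have h3 : ρ'' < Real.pi/(2*α) := by rw [hρ''def]; linarith
  have hα'' : ρ'' * α < Real.pi/2 := by
    have h4 := (lt_div_iff₀ h2α).mp h3
    nlinarith
  have hαρ : ρ * α < Real.pi/2 := by nlinarith [lt_trans h1 (lt_trans h2 h3)]
  have hc0 : 0 < Real.cos (ρ*α) := by
    apply Real.cos_pos_of_mem_Ioo
    exact ⟨by nlinarith [Real.pi_pos], hαρ⟩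
  obtain ⟨C', hC'pos, hC'⟩ := hford ρ' h1
  have hδpos : 0 < a * Real.cos (ρ*α) / 2 := by positivity
  obtain ⟨r₁, hr₁1, hr₁⟩ := aux_ray_bound f ρ α _ hδpos hρ hfin₁ hind₁
  obtain ⟨r₂, hr₂1, hr₂⟩ := aux_ray_bound f ρ (-α) _ hδpos hρ hfin₂ hind₂
  set R := max (|r₀| + 2) (max r₁ r₂) with hR
  have hRpos : (0:ℝ) < R := lt_of_lt_of_le (by positivity) (le_max_left _ _)
  set L := Real.log R with hLdef
  have heL : Real.exp L = R := Real.exp_log hRpos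
  have hLr₀ : r₀ < Real.exp L := by
    rw [heL]
    calc r₀ ≤ |r₀| := le_abs_self _
      _ < |r₀| + 2 := by linarith
      _ ≤ R := le_max_left _ _
  -- compact bound
  set K := closure (Sector (-α) α r₀) ∩ Metric.closedBall 0 R with hK
  have hKcomp : IsCompact K :=
    IsCompact.of_isClosed_subset (isCompact_closedBall 0 R)
      (isClosed_closure.inter Metric.isClosed_closedBall) Set.inter_subset_right
  obtain ⟨M, hM⟩ := hKcomp.exists_bound_of_continuousOn
      ((hf.continuousOn).mono Set.inter_subset_left)
  set B := max M 1 with hBdef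
  have hB1 : (1:ℝ) ≤ B := le_max_right _ _
  have hKbound : ∀ z ∈ K, ‖f z‖ ≤ B := fun z hz =>
    le_trans (by exact hM z hz) (le_max_left _ _)
  -- ray bound in strip form
  have hrayS : ∀ x, L ≤ x → ∀ y : ℝ, (y = α ∨ y = -α) →
      ‖f ((Real.exp x : ℂ) * Complex.exp ((y:ℂ)*Complex.I))‖
        ≤ Real.exp ((a * Real.cos (ρ*α)/2) * Real.exp (ρ * x)) := by
    intro x hx y hy
    have hex : R ≤ Real.exp x := by rw [← heL]; exact Real.exp_le_exp.mpr hx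
    have hrp : (Real.exp x)^ρ = Real.exp (ρ * x) := aux_exp_rpow x ρ
    rcases hy with h | h <;> rw [h]
    · have h5 := hr₁ (Real.exp x)
        (le_trans (le_trans (le_max_left r₁ r₂) (le_max_right _ _)) hex)
      rwa [hrp] at h5
    · have h5 := hr₂ (Real.exp x)
        (le_trans (le_trans (le_max_right r₁ r₂) (le_max_right _ _)) hex)
      rwa [hrp] at h5
  -- left bound
  have hleftS : ∀ y : ℝ, |y| ≤ α →
      ‖f ((Real.exp L : ℂ) * Complex.exp ((y:ℂ)*Complex.I))‖ ≤ B := by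
    intro y hy
    apply hKbound
    refine ⟨aux_mem_closure_sector hα hLr₀ hy, ?_⟩
    rw [Metric.mem_closedBall, dist_zero_right, aux_abs_mul_expI,
      abs_of_pos (Real.exp_pos L), heL]
  -- final
  refine ⟨B, by linarith, fun z hz => ?_⟩
  rcases le_or_gt (‖z‖) R with hle | hgt
  · have h6 : ‖f z‖ ≤ B := hKbound z ⟨hz, by
      rw [Metric.mem_closedBall, dist_zero_right]; exact hle⟩
    calc ‖f z‖ ≤ B := h6
      _ = B * 1 := (mul_one B).symm
      _ ≤ B * Real.exp (a * ‖z‖ ^ ρ) := by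
          apply mul_le_mul_of_nonneg_left _ (by linarith)
          apply Real.one_le_exp
          have : (0:ℝ) ≤ ‖z‖ ^ ρ := Real.rpow_nonneg (norm_nonneg z) ρ
          positivity
  · have hzabs : |r₀| + 2 ≤ ‖z‖ := le_trans (le_max_left _ _) (le_of_lt hgt)
    obtain ⟨θ, hθ1, hθ2, hzeq⟩ := aux_closure_repr hz hzabs
    set w : ℂ := (Real.log (‖z‖) : ℂ) + (θ:ℂ)*Complex.I with hw
    have hwre : w.re = Real.log (‖z‖) := by simp [hw]
    have hwim : w.im = θ := by simp [hw]
    have habspos : 0 < ‖z‖ := by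
      have := abs_nonneg r₀; linarith
    have hexpw : Complex.exp w = z := by
      rw [hw, Complex.exp_add, ← Complex.ofReal_exp, Real.exp_log habspos]
      exact hzeq.symm
    have hbound := aux_strip α r₀ ρ ρ' ρ'' a C' B L f hα hρ h1 h2 hα'' ha hC'pos hB1
      hf hC' hLr₀ hrayS hleftS w
      (by rw [hwre, hLdef]; exact Real.log_lt_log hRpos hgt)
      (by rw [hwim]; exact abs_le.mpr ⟨hθ1, hθ2⟩)
    rw [hexpw, hwre] at hbound
    have h7 : Real.exp (ρ * Real.log (‖z‖)) = ‖z‖ ^ ρ := by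
      rw [Real.rpow_def_of_pos habspos, mul_comm]
    rwa [h7] at hbound
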